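/- Let 𝒜 be an abelian category and let K be a bounded cochain complex in 𝒜 such that for every integer i the cohomology object H^i(K) is a projective object of 𝒜. Then in the derived category D(𝒜), K is isomorphic to the direct sum over i of the shifted objects H^i(K)[-i]. -/

import Mathlib

open CategoryTheory CategoryTheory.Limits

universe w v u

section

variable {𝒜 : Type u} [Category.{v} 𝒜] [Abelian 𝒜]

/-- The cochain complex whose term in degree `i` is the `i`-th cohomology object
`H^i(K)` of `K`, with all differentials zero.  This complex is the direct sum
`⊕ᵢ H^i(K)[-i]` of the complexes `H^i(K)[-i]`, each of which consists of `H^i(K)`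
placed in degree `i` with zeros elsewhere. -/
noncomputable def gradedHomologyComplex (K : CochainComplex 𝒜 ℤ) : CochainComplex 𝒜 ℤ where
  X i := K.homology i
  d _ _ := 0
  shape _ _ _ := rfl
  d_comp_d' := by intros; simp

/-- Let `𝒜` be an abelian category and `K` a bounded cochain complex in `𝒜`
such that every cohomology object `H^i(K)` is projective. Then, in the derived category
`D(𝒜)`, `K` is isomorphic to the direct sum over `i` of the shifted objects `H^i(K)[-i]`,
i.e. to the complex with terms `H^i(K)` and zero differentials. -/
theorem split_lem_2_1_abelian [HasDerivedCategory.{w} 𝒜]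
    (K : CochainComplex 𝒜 ℤ)
    (hbdd : ∃ a b : ℤ, ∀ i : ℤ, (i < a ∨ b < i) → IsZero (K.X i))
    (hproj : ∀ i : ℤ, Projective (K.homology i)) :
    Nonempty (DerivedCategory.Q.obj K ≅ DerivedCategory.Q.obj (gradedHomologyComplex K)) := by
  set G := gradedHomologyComplex K with hG
  -- a section of the projection `K.cycles i ⟶ K.homology i`, using projectivity
  let s : ∀ i : ℤ, K.homology i ⟶ K.cycles i := fun i =>
    haveI := hproj i
    Projective.factorThru (𝟙 _) (K.homologyπ i)
  have hs : ∀ i, s i ≫ K.homologyπ i = 𝟙 _ := fun i => by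
    haveI := hproj i
    simp [s]
  -- the chain map `G ⟶ K` given in degree `i` by `s i ≫ K.iCycles i`
  let φ : G ⟶ K :=
    { f := fun i => s i ≫ K.iCycles i
      comm' := by
        intro i j hij
        have : G.d i j = 0 := rfl
        rw [this, zero_comp]
        exact (Category.assoc _ _ _).trans (by rw [HomologicalComplex.iCycles_d]; exact comp_zero) }
  have hcyc : ∀ i : ℤ, HomologicalComplex.cyclesMap φ i = G.iCycles i ≫ s i := by
    intro i
    rw [← cancel_mono (K.iCycles i)]
    simp [HomologicalComplex.cyclesMap_i, φ]
    exact (Category.assoc _ _ _).symm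
  have hiso : ∀ i : ℤ, IsIso (HomologicalComplex.homologyMap φ i) := by
    intro i
    have h1 : G.homologyπ i ≫ HomologicalComplex.homologyMap φ i = G.iCycles i := by
      rw [HomologicalComplex.homologyπ_naturality, hcyc]
      erw [Category.assoc, hs]
      exact Category.comp_id _
    haveI : IsIso (G.homologyπ i) := G.isIso_homologyπ (i - 1) i (by simp) rfl
    haveI : IsIso (G.iCycles i) := G.isIso_iCycles i (i + 1) (by simp) rfl
    have : HomologicalComplex.homologyMap φ i = inv (G.homologyπ i) ≫ G.iCycles i := by
      rw [← h1]
      erw [IsIso.inv_hom_id_assoc]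
    rw [this]
    exact IsIso.comp_isIso' inferInstance ‹IsIso (G.iCycles i)›
  haveI : QuasiIso φ := by
    rw [quasiIso_iff]
    intro i
    rw [quasiIsoAt_iff_isIso_homologyMap]
    exact hiso i
  exact ⟨(asIso (DerivedCategory.Q.map φ)).symm⟩

end
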